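/- Set ξ₀ = b + (Γ₁ − (b+2a)²)/(b + 2a − Γ₂) and ξ_cr = b + (1 − Γ₁)/(1 + Γ₂), and for ξ ∈ ℝ set D(ξ) = (b − ξ)² + 4(Γ₁ + (ξ − b)Γ₂), μ₋(ξ) = (b − ξ − √D(ξ))/2, μ₊(ξ) = (b − ξ + √D(ξ))/2. Suppose ξ_cr < ξ < ξ' < ξ₀, and suppose μ₀, μ₀' ∈ (b+2a, −1) satisfy μ₋(ξ) < μ₀ < μ₊(ξ), μ₋(ξ') < μ₀' < μ₊(ξ'), ∫_{μ₀}^{−1} (λ − μ₋(ξ))(λ − μ₊(ξ))·w(λ) dλ = 0 and ∫_{μ₀'}^{−1} (λ − μ₋(ξ'))(λ − μ₊(ξ'))·w(λ) dλ = 0. Then μ₀' < μ₀; that is, the implicitly defined crossing point μ₀(ξ) is a strictly decreasing function of ξ on (ξ_cr, ξ₀). -/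

import Mathlib

open MeasureTheory

/-- The weight `w(λ) = ((λ² − 1)((λ − b)² − 4a²))^(−1/2)` on the spectral gap. -/
noncomputable def todaWeight (a b : ℝ) : ℝ → ℝ :=
  fun x => ((x^2 - 1) * ((x - b)^2 - 4*a^2)) ^ ((-1 : ℝ)/2)

/-- `Γ₁`, the normalized second weighted moment of the gap. -/
noncomputable def Gamma1 (a b : ℝ) : ℝ :=
  (∫ x in (b + 2*a)..(-1), x^2 * todaWeight a b x) /
    (∫ x in (b + 2*a)..(-1), todaWeight a b x)

/-- `Γ₂`, the normalized first weighted moment of the gap. -/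
noncomputable def Gamma2 (a b : ℝ) : ℝ :=
  (∫ x in (b + 2*a)..(-1), x * todaWeight a b x) /
    (∫ x in (b + 2*a)..(-1), todaWeight a b x)

/-- The discriminant `D(ξ)`. -/
noncomputable def discrD (a b ξ : ℝ) : ℝ :=
  (b - ξ)^2 + 4*(Gamma1 a b + (ξ - b) * Gamma2 a b)

/-- The smaller root `μ₋(ξ)`. -/
noncomputable def muMinus (a b ξ : ℝ) : ℝ :=
  (b - ξ - Real.sqrt (discrD a b ξ))/2

/-- The larger root `μ₊(ξ)`. -/
noncomputable def muPlus (a b ξ : ℝ) : ℝ :=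
  (b - ξ + Real.sqrt (discrD a b ξ))/2

/-- Auxiliary quadratic integrand in expanded form. -/
noncomputable def Qfun (a b t : ℝ) : ℝ → ℝ := fun x =>
  x^2 * todaWeight a b x + ((t - b) * (x * todaWeight a b x)
    + (-(Gamma1 a b + (t - b) * Gamma2 a b)) * todaWeight a b x)

lemma toda_pos (a b : ℝ) (ha : 0 < a) {x : ℝ}
    (hx : x ∈ Set.Ioo (b + 2*a) (-1 : ℝ)) : 0 < todaWeight a b x := by
  obtain ⟨h1, h2⟩ := hx
  have hb1 : 0 < x^2 - 1 := by nlinarith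
  have hb2 : 0 < (x - b)^2 - 4*a^2 := by nlinarith
  exact Real.rpow_pos_of_pos (mul_pos hb1 hb2) _

lemma expandQ (a b t : ℝ) (hD : 0 ≤ discrD a b t) (x : ℝ) :
    (x - muMinus a b t) * (x - muPlus a b t) * todaWeight a b x = Qfun a b t x := by
  have hs : Real.sqrt (discrD a b t) ^ 2 = discrD a b t := Real.sq_sqrt hD
  rw [discrD] at hs
  unfold muMinus muPlus Qfun discrD
  linear_combination (-(todaWeight a b x)/4) * hs

lemma Qfun_intOn (a b t c d : ℝ)
    (hw : IntervalIntegrable (todaWeight a b) volume (b + 2*a) (-1))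
    (hw1 : IntervalIntegrable (fun x => x * todaWeight a b x) volume (b + 2*a) (-1))
    (hw2 : IntervalIntegrable (fun x => x^2 * todaWeight a b x) volume (b + 2*a) (-1))
    (hc : c ∈ Set.uIcc (b + 2*a) (-1 : ℝ)) (hd : d ∈ Set.uIcc (b + 2*a) (-1 : ℝ)) :
    IntervalIntegrable (Qfun a b t) volume c d := by
  unfold Qfun
  exact (hw2.add ((hw1.const_mul _).add (hw.const_mul _))).mono_set
    (Set.uIcc_subset_uIcc hc hd)

lemma Qfun_total (a b t : ℝ) (ha : 0 < a) (hgap : b + 2*a < -1)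
    (hw : IntervalIntegrable (todaWeight a b) volume (b + 2*a) (-1))
    (hw1 : IntervalIntegrable (fun x => x * todaWeight a b x) volume (b + 2*a) (-1))
    (hw2 : IntervalIntegrable (fun x => x^2 * todaWeight a b x) volume (b + 2*a) (-1)) :
    ∫ x in (b + 2*a)..(-1 : ℝ), Qfun a b t x = 0 := by
  have hW : 0 < ∫ x in (b + 2*a)..(-1 : ℝ), todaWeight a b x :=
    intervalIntegral.intervalIntegral_pos_of_pos_on hw (fun x hx => toda_pos a b ha hx) hgap
  have h1 : (∫ x in (b + 2*a)..(-1 : ℝ), x * todaWeight a b x)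
      = Gamma2 a b * ∫ x in (b + 2*a)..(-1 : ℝ), todaWeight a b x := by
    rw [Gamma2]; field_simp
  have h2 : (∫ x in (b + 2*a)..(-1 : ℝ), x^2 * todaWeight a b x)
      = Gamma1 a b * ∫ x in (b + 2*a)..(-1 : ℝ), todaWeight a b x := by
    rw [Gamma1]; field_simp
  unfold Qfun
  rw [intervalIntegral.integral_add hw2 ((hw1.const_mul _).add (hw.const_mul _)),
    intervalIntegral.integral_add (hw1.const_mul _) (hw.const_mul _),
    intervalIntegral.integral_const_mul, intervalIntegral.integral_const_mul, h1, h2]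
  ring


/-- the implicitly defined crossing point `μ₀(ξ)` is strictly
decreasing in `ξ` on `(ξ_cr, ξ₀)`. -/
theorem crossing_point_strictly_decreasing
    (a b : ℝ) (ha : 0 < a) (hgap : b + 2*a < -1)
    (hw : IntervalIntegrable (todaWeight a b) volume (b + 2*a) (-1))
    (hw1 : IntervalIntegrable (fun x => x * todaWeight a b x) volume (b + 2*a) (-1))
    (hw2 : IntervalIntegrable (fun x => x^2 * todaWeight a b x) volume (b + 2*a) (-1))
    (ξ ξ' μ₀ μ₀' : ℝ)
    (hξcr : b + (1 - Gamma1 a b)/(1 + Gamma2 a b) < ξ)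
    (hξξ' : ξ < ξ')
    (hξ₀ : ξ' < b + (Gamma1 a b - (b + 2*a)^2)/(b + 2*a - Gamma2 a b))
    (hμ₀gap : μ₀ ∈ Set.Ioo (b + 2*a) (-1 : ℝ))
    (hμ₀'gap : μ₀' ∈ Set.Ioo (b + 2*a) (-1 : ℝ))
    (hμ₀l : muMinus a b ξ < μ₀) (hμ₀r : μ₀ < muPlus a b ξ)
    (hμ₀'l : muMinus a b ξ' < μ₀') (hμ₀'r : μ₀' < muPlus a b ξ')
    (hint : ∫ x in μ₀..(-1 : ℝ),
      (x - muMinus a b ξ) * (x - muPlus a b ξ) * todaWeight a b x = 0)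
    (hint' : ∫ x in μ₀'..(-1 : ℝ),
      (x - muMinus a b ξ') * (x - muPlus a b ξ') * todaWeight a b x = 0) :
    μ₀' < μ₀ := by
  set L := b + 2*a with hL
  -- basic facts
  have hWpos : 0 < ∫ x in L..(-1 : ℝ), todaWeight a b x :=
    intervalIntegral.intervalIntegral_pos_of_pos_on hw (fun x hx => toda_pos a b ha hx) hgap
  -- discriminants nonneg
  have hsξ : 0 < Real.sqrt (discrD a b ξ) := by
    rw [muMinus] at hμ₀l; rw [muPlus] at hμ₀r; linarith
  have hsξ' : 0 < Real.sqrt (discrD a b ξ') := by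
    rw [muMinus] at hμ₀'l; rw [muPlus] at hμ₀'r; linarith
  have hDξ : 0 ≤ discrD a b ξ := (Real.sqrt_pos.mp hsξ).le
  have hDξ' : 0 ≤ discrD a b ξ' := (Real.sqrt_pos.mp hsξ').le
  -- memberships
  have memL : L ∈ Set.uIcc L (-1 : ℝ) := Set.left_mem_uIcc
  have memR : (-1 : ℝ) ∈ Set.uIcc L (-1 : ℝ) := Set.right_mem_uIcc
  have memμ₀ : μ₀ ∈ Set.uIcc L (-1 : ℝ) :=
    Set.mem_uIcc.mpr (Or.inl ⟨hμ₀gap.1.le, hμ₀gap.2.le⟩)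
  have memμ₀' : μ₀' ∈ Set.uIcc L (-1 : ℝ) :=
    Set.mem_uIcc.mpr (Or.inl ⟨hμ₀'gap.1.le, hμ₀'gap.2.le⟩)
  -- rewrite the hypotheses in expanded form
  simp only [expandQ a b ξ hDξ] at hint
  simp only [expandQ a b ξ' hDξ'] at hint'
  -- integrability of the linear factor integrand
  have hlin : IntervalIntegrable (fun x => (x - Gamma2 a b) * todaWeight a b x)
      volume L (-1) := by
    have h := hw1.add (hw.const_mul (-(Gamma2 a b)))
    have heq : (fun x => x * todaWeight a b x + (-(Gamma2 a b)) * todaWeight a b x)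
        = fun x => (x - Gamma2 a b) * todaWeight a b x := by funext x; ring
    rwa [heq] at h
  -- total integral of the linear factor is zero
  have hlin_total : ∫ x in L..(-1 : ℝ), (x - Gamma2 a b) * todaWeight a b x = 0 := by
    have heq : (fun x => (x - Gamma2 a b) * todaWeight a b x)
        = fun x => x * todaWeight a b x + (-(Gamma2 a b)) * todaWeight a b x := by
      funext x; ring
    rw [heq, intervalIntegral.integral_add hw1 (hw.const_mul _),
      intervalIntegral.integral_const_mul]
    have h1 : (∫ x in L..(-1 : ℝ), x * todaWeight a b x)
        = Gamma2 a b * ∫ x in L..(-1 : ℝ), todaWeight a b x := by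
      rw [Gamma2, ← hL]; field_simp
    rw [h1]; ring
  -- positivity of the partial linear integrals
  have hP : ∀ c : ℝ, c ∈ Set.Ioo L (-1 : ℝ) →
      0 < ∫ x in c..(-1 : ℝ), (x - Gamma2 a b) * todaWeight a b x := by
    intro c hc
    have memc : c ∈ Set.uIcc L (-1 : ℝ) := Set.mem_uIcc.mpr (Or.inl ⟨hc.1.le, hc.2.le⟩)
    rcases le_or_gt c (Gamma2 a b) with hcg | hcg
    · -- use the complement
      have hsplit : (∫ x in L..c, (x - Gamma2 a b) * todaWeight a b x)
          + ∫ x in c..(-1 : ℝ), (x - Gamma2 a b) * todaWeight a b x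
          = ∫ x in L..(-1 : ℝ), (x - Gamma2 a b) * todaWeight a b x :=
        intervalIntegral.integral_add_adjacent_intervals
          (hlin.mono_set (Set.uIcc_subset_uIcc memL memc))
          (hlin.mono_set (Set.uIcc_subset_uIcc memc memR))
      have hneg : 0 < ∫ x in L..c, (Gamma2 a b - x) * todaWeight a b x := by
        refine intervalIntegral.intervalIntegral_pos_of_pos_on ?_ ?_ hc.1
        · have h : IntervalIntegrable (fun x => (Gamma2 a b - x) * todaWeight a b x)
              volume L c := by
            have h0 := (hlin.mono_set (Set.uIcc_subset_uIcc memL memc)).neg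
            have heq : (fun x => (Gamma2 a b - x) * todaWeight a b x)
                = -(fun x => (x - Gamma2 a b) * todaWeight a b x) := by funext x; simp; ring
            rwa [heq]
          exact h
        · intro x hx
          have hxg : x ∈ Set.Ioo L (-1 : ℝ) := ⟨hx.1, lt_trans hx.2 hc.2⟩
          have := toda_pos a b ha hxg
          have : 0 < Gamma2 a b - x := by linarith [hx.2]
          exact mul_pos this (toda_pos a b ha hxg)
      have hflip : (∫ x in L..c, (x - Gamma2 a b) * todaWeight a b x)
          = - ∫ x in L..c, (Gamma2 a b - x) * todaWeight a b x := by
        rw [← intervalIntegral.integral_neg]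
        congr 1; funext x; ring
      rw [hlin_total] at hsplit
      rw [hflip] at hsplit
      linarith
    · refine intervalIntegral.intervalIntegral_pos_of_pos_on
        (hlin.mono_set (Set.uIcc_subset_uIcc memc memR)) ?_ hc.2
      intro x hx
      have hxg : x ∈ Set.Ioo L (-1 : ℝ) := ⟨lt_trans hc.1 hx.1, hx.2⟩
      exact mul_pos (by linarith [hx.1]) (toda_pos a b ha hxg)
  -- difference identity
  have hdiff : ∀ c : ℝ, c ∈ Set.uIcc L (-1 : ℝ) →
      (∫ x in c..(-1 : ℝ), Qfun a b ξ' x) - (∫ x in c..(-1 : ℝ), Qfun a b ξ x)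
        = (ξ' - ξ) * ∫ x in c..(-1 : ℝ), (x - Gamma2 a b) * todaWeight a b x := by
    intro c memc
    rw [← intervalIntegral.integral_sub
      (Qfun_intOn a b ξ' c (-1) hw hw1 hw2 memc memR)
      (Qfun_intOn a b ξ c (-1) hw hw1 hw2 memc memR),
      ← intervalIntegral.integral_const_mul]
    congr 1; funext x; unfold Qfun; ring
  -- the Q-integrals over μ₀' (for ξ) and μ₀ (for ξ') via hdiff
  have hA : (∫ x in μ₀'..(-1 : ℝ), Qfun a b ξ x) < 0 := by
    have h := hdiff μ₀' memμ₀'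
    rw [hint'] at h
    have := hP μ₀' hμ₀'gap
    nlinarith
  have hB : 0 < ∫ x in μ₀..(-1 : ℝ), Qfun a b ξ' x := by
    have h := hdiff μ₀ memμ₀
    rw [hint] at h
    have := hP μ₀ hμ₀gap
    nlinarith
  -- main contradiction argument
  by_contra hcon
  push_neg at hcon  -- μ₀ ≤ μ₀'
  rcases eq_or_lt_of_le hcon with heq | hlt
  · rw [← heq] at hA; rw [hint] at hA; exact lt_irrefl 0 hA
  -- μ₀ < μ₀'
  -- sign lemma: Q is negative between its roots (inside the gap)
  have hsign : ∀ t : ℝ, 0 ≤ discrD a b t → ∀ x ∈ Set.Ioo μ₀ μ₀',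
      muMinus a b t ≤ μ₀ → μ₀' ≤ muPlus a b t → Qfun a b t x < 0 := by
    intro t hD x hx h1 h2
    rw [← expandQ a b t hD x]
    have hxg : x ∈ Set.Ioo L (-1 : ℝ) := ⟨lt_trans hμ₀gap.1 hx.1, lt_trans hx.2 hμ₀'gap.2⟩
    refine mul_neg_of_neg_of_pos (mul_neg_of_pos_of_neg ?_ ?_) (toda_pos a b ha hxg)
    · linarith [hx.1]
    · linarith [hx.2]
  -- splitting over μ₀ < μ₀' < -1
  have hsplitQ : ∀ t : ℝ, (∫ x in μ₀..μ₀', Qfun a b t x)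
      + ∫ x in μ₀'..(-1 : ℝ), Qfun a b t x = ∫ x in μ₀..(-1 : ℝ), Qfun a b t x :=
    fun t => intervalIntegral.integral_add_adjacent_intervals
      (Qfun_intOn a b t μ₀ μ₀' hw hw1 hw2 memμ₀ memμ₀')
      (Qfun_intOn a b t μ₀' (-1) hw hw1 hw2 memμ₀' memR)
  -- Claim 1: μ₊(ξ) < μ₀'
  have hclaim1 : muPlus a b ξ < μ₀' := by
    by_contra h
    push_neg at h
    have hmid : (∫ x in μ₀..μ₀', Qfun a b ξ x) < 0 := by
      have hni : IntervalIntegrable (fun x => -(Qfun a b ξ x)) volume μ₀ μ₀' := by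
        have h0 := (Qfun_intOn a b ξ μ₀ μ₀' hw hw1 hw2 memμ₀ memμ₀').neg
        have heq : (fun x => -(Qfun a b ξ x)) = -(Qfun a b ξ) := by funext x; simp
        rwa [heq]
      have hpos := intervalIntegral.intervalIntegral_pos_of_pos_on hni
        (fun x hx => neg_pos.mpr (hsign ξ hDξ x hx hμ₀l.le h)) hlt
      rw [intervalIntegral.integral_neg] at hpos
      linarith
    have := hsplitQ ξ
    rw [hint] at this
    linarith
  -- Claim 2: μ₀ < μ₋(ξ')
  have hclaim2 : μ₀ < muMinus a b ξ' := by
    by_contra h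
    push_neg at h
    have hmid : (∫ x in μ₀..μ₀', Qfun a b ξ' x) < 0 := by
      have hni : IntervalIntegrable (fun x => -(Qfun a b ξ' x)) volume μ₀ μ₀' := by
        have h0 := (Qfun_intOn a b ξ' μ₀ μ₀' hw hw1 hw2 memμ₀ memμ₀').neg
        have heq : (fun x => -(Qfun a b ξ' x)) = -(Qfun a b ξ') := by funext x; simp
        rwa [heq]
      have hpos := intervalIntegral.intervalIntegral_pos_of_pos_on hni
        (fun x hx => neg_pos.mpr (hsign ξ' hDξ' x hx h hμ₀'r.le)) hlt
      rw [intervalIntegral.integral_neg] at hpos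
      linarith
    have := hsplitQ ξ'
    rw [hint'] at this
    linarith
  -- sum of roots contradiction
  have hsum : muMinus a b ξ + muPlus a b ξ = b - ξ := by
    rw [muMinus, muPlus]; ring
  have hsum' : muMinus a b ξ' + muPlus a b ξ' = b - ξ' := by
    rw [muMinus, muPlus]; ring
  linarith [hμ₀l, hclaim1, hclaim2, hμ₀'r]
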